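/- Let G be a finite p-solvable group, let q ≠ p be a prime, let P be a Sylow p-subgroup of G, and let Q be a q-subgroup of G with [P,Q] = 1. Then Q ≤ O_{p'}(G). -/

import Mathlib

/-- `G` is `p`-solvable: there is a subnormal series from `⊥` to `⊤` each of whose factors
is a `p`-group or a `p'`-group. -/
def IsPSolvable (p : ℕ) (G : Type*) [Group G] : Prop :=
  ∃ (n : ℕ) (s : Fin (n + 1) → Subgroup G), s 0 = ⊥ ∧ s (Fin.last n) = ⊤ ∧
    ∀ i : Fin n, s i.castSucc ≤ s i.succ ∧
      ((s i.castSucc).subgroupOf (s i.succ)).Normal ∧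
      ((∃ k : ℕ, (s i.castSucc).relIndex (s i.succ) = p ^ k) ∨
        ¬ p ∣ (s i.castSucc).relIndex (s i.succ))

/-- `O_p(G)`, the largest normal `p`-subgroup of `G`. -/
def pCore (p : ℕ) (G : Type*) [Group G] : Subgroup G :=
  ⨆ (N : Subgroup G) (_ : N.Normal) (_ : IsPGroup p N), N

/-- `O_{p'}(G)`, the largest normal `p'`-subgroup of a finite group `G`. -/
def pPrimeCore (p : ℕ) (G : Type*) [Group G] : Subgroup G :=
  ⨆ (N : Subgroup G) (_ : N.Normal) (_ : ¬ p ∣ Nat.card N), N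

open Subgroup Pointwise

set_option linter.unusedSectionVars false

section CoreLemmas
variable {p : ℕ} {G : Type*} [Group G] [Finite G]

private lemma card_sup_dvd (N₁ N₂ : Subgroup G) [h : N₂.Normal] :
    Nat.card ↥(N₁ ⊔ N₂) ∣ Nat.card N₁ * Nat.card N₂ := by
  have h1 : Nat.card ↥(N₁ ⊔ N₂) =
      (N₂.subgroupOf (N₁ ⊔ N₂)).index * Nat.card (N₂.subgroupOf (N₁ ⊔ N₂)) :=
    (Subgroup.index_mul_card _).symm
  have h2 : Nat.card (N₂.subgroupOf (N₁ ⊔ N₂)) = Nat.card N₂ :=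
    Nat.card_congr (Subgroup.subgroupOfEquivOfLe le_sup_right).toEquiv
  have h3 : (N₂.subgroupOf (N₁ ⊔ N₂)).index = N₂.relIndex N₁ := by
    rw [← Subgroup.relIndex, Subgroup.relIndex_sup_right]
  have h4 : N₂.relIndex N₁ ∣ Nat.card N₁ := Subgroup.index_dvd_card _
  rw [h1, h2, h3]
  exact Nat.mul_dvd_mul h4 dvd_rfl

private lemma le_pPrimeCore {N : Subgroup G} (h1 : N.Normal) (h2 : ¬ p ∣ Nat.card N) :
    N ≤ pPrimeCore p G :=
  le_iSup_of_le N (le_iSup_of_le h1 (le_iSup_of_le h2 le_rfl))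

private lemma le_pCore {N : Subgroup G} (h1 : N.Normal) (h2 : IsPGroup p N) :
    N ≤ pCore p G :=
  le_iSup_of_le N (le_iSup_of_le h1 (le_iSup_of_le h2 le_rfl))

private lemma pPrimeCore_spec (hp : p.Prime) :
    (pPrimeCore p G).Normal ∧ ¬ p ∣ Nat.card (pPrimeCore p G) := by
  obtain ⟨m, -, hmax⟩ := Finite.exists_le_maximal
    (p := fun N : Subgroup G => N.Normal ∧ ¬ p ∣ Nat.card N) (a := ⊥)
    ⟨inferInstance, by rw [Subgroup.card_bot]; exact Nat.Prime.not_dvd_one hp⟩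
  have hle : ∀ N : Subgroup G, N.Normal → ¬ p ∣ Nat.card N → N ≤ m := by
    intro N h1 h2
    haveI := h1; haveI := hmax.1.1
    have hsup : (N ⊔ m).Normal ∧ ¬ p ∣ Nat.card ↥(N ⊔ m) := by
      refine ⟨inferInstance, fun hd => ?_⟩
      rcases (Nat.Prime.dvd_mul hp).mp (hd.trans (card_sup_dvd N m)) with h | h
      exacts [h2 h, hmax.1.2 h]
    exact le_sup_left.trans (hmax.2 hsup le_sup_right)
  have heq : pPrimeCore p G = m := by
    refine le_antisymm (iSup_le fun N => iSup_le fun h1 => iSup_le fun h2 => hle N h1 h2) ?_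
    exact le_pPrimeCore hmax.1.1 hmax.1.2
  rw [heq]; exact hmax.1

private lemma pCore_spec (hp : p.Prime) :
    (pCore p G).Normal ∧ IsPGroup p (pCore p G) := by
  haveI := Fact.mk hp
  obtain ⟨m, -, hmax⟩ := Finite.exists_le_maximal
    (p := fun N : Subgroup G => N.Normal ∧ IsPGroup p N) (a := ⊥)
    ⟨inferInstance, IsPGroup.of_bot⟩
  have hle : ∀ N : Subgroup G, N.Normal → IsPGroup p N → N ≤ m := by
    intro N h1 h2
    haveI := h1; haveI := hmax.1.1
    have hsup : (N ⊔ m).Normal ∧ IsPGroup p ↥(N ⊔ m) := by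
      refine ⟨inferInstance, ?_⟩
      obtain ⟨a, ha⟩ := h2.exists_card_eq
      obtain ⟨b, hb⟩ := hmax.1.2.exists_card_eq
      have hd := card_sup_dvd N m
      rw [ha, hb, ← pow_add] at hd
      obtain ⟨j, -, hj⟩ := (Nat.dvd_prime_pow hp).mp hd
      exact IsPGroup.iff_card.mpr ⟨j, hj⟩
    exact le_sup_left.trans (hmax.2 hsup le_sup_right)
  have heq : pCore p G = m := by
    refine le_antisymm (iSup_le fun N => iSup_le fun h1 => iSup_le fun h2 => hle N h1 h2) ?_
    exact le_pCore hmax.1.1 hmax.1.2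
  rw [heq]; exact hmax.1

private lemma pCore_map_subtype_normal (hp : p.Prime) (M : Subgroup G) [hM : M.Normal] :
    ((pCore p M).map M.subtype).Normal := by
  constructor
  intro x hx g
  obtain ⟨y, hy, rfl⟩ := hx
  have hle : (pCore p ↥M).map (MulAut.conjNormal g : MulAut M).toMonoidHom ≤ pCore p ↥M :=
    le_pCore (((pCore_spec hp).1).map _ (MulAut.conjNormal g : MulAut M).surjective)
      ((pCore_spec hp).2.map _)
  have key : (MulAut.conjNormal g : MulAut M) y ∈ pCore p ↥M :=
    hle (mem_map_of_mem _ hy)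
  exact ⟨(MulAut.conjNormal g : MulAut M) y, key, by simp⟩

private lemma pPrimeCore_map_subtype_normal (hp : p.Prime) (M : Subgroup G) [hM : M.Normal] :
    ((pPrimeCore p M).map M.subtype).Normal := by
  constructor
  intro x hx g
  obtain ⟨y, hy, rfl⟩ := hx
  have hle : (pPrimeCore p ↥M).map (MulAut.conjNormal g : MulAut M).toMonoidHom
      ≤ pPrimeCore p ↥M := by
    refine le_pPrimeCore
      (((pPrimeCore_spec hp).1).map _ (MulAut.conjNormal g : MulAut M).surjective) ?_
    have hc : Nat.card ((pPrimeCore p ↥M).map (MulAut.conjNormal g : MulAut M).toMonoidHom)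
        = Nat.card (pPrimeCore p ↥M) :=
      Nat.card_congr (Subgroup.equivMapOfInjective _ _
        (MulAut.conjNormal g : MulAut M).injective).toEquiv.symm
    rw [hc]; exact (pPrimeCore_spec hp).2
  have key : (MulAut.conjNormal g : MulAut M) y ∈ pPrimeCore p ↥M :=
    hle (mem_map_of_mem _ hy)
  exact ⟨(MulAut.conjNormal g : MulAut M) y, key, by simp⟩

end CoreLemmas

section SolvLemmas
variable {p : ℕ} {G : Type*} [Group G]

private lemma relindex_map_dvd {G' : Type*} [Group G'] (f : G →* G') {A B : Subgroup G} :
    ((A.map f).relIndex (B.map f)) ∣ A.relIndex B := by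
  have h1 : (A.subgroupOf B).map (f.subgroupMap B) ≤ (A.map f).subgroupOf (B.map f) := by
    rintro x ⟨⟨a, haB⟩, ha, rfl⟩
    exact ⟨a, ha, rfl⟩
  calc (A.map f).relIndex (B.map f) = ((A.map f).subgroupOf (B.map f)).index := rfl
    _ ∣ ((A.subgroupOf B).map (f.subgroupMap B)).index := Subgroup.index_dvd_of_le h1
    _ ∣ (A.subgroupOf B).index :=
        Subgroup.index_map_dvd (H := A.subgroupOf B) (MonoidHom.subgroupMap_surjective f B)
    _ = A.relIndex B := rfl

private lemma isPSolvable_of_surjective {G' : Type*} [Group G'] (hp : p.Prime) (f : G →* G')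
    (hf : Function.Surjective f) (hs : IsPSolvable p G) : IsPSolvable p G' := by
  obtain ⟨n, s, h0, hl, hstep⟩ := hs
  refine ⟨n, fun i => (s i).map f, by simp [h0],
    by simp only [hl]; exact Subgroup.map_top_of_surjective f hf, fun i => ?_⟩
  obtain ⟨hle, hnorm, hrel⟩ := hstep i
  refine ⟨Subgroup.map_mono hle, ?_, ?_⟩
  · rw [Subgroup.normal_subgroupOf_iff (Subgroup.map_mono hle)]
    rintro h k ⟨a, ha, rfl⟩ ⟨b, hb, rfl⟩
    exact ⟨b * a * b⁻¹, (Subgroup.normal_subgroupOf_iff hle).mp hnorm a b ha hb, by simp⟩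
  · have key := relindex_map_dvd f (A := s i.castSucc) (B := s i.succ)
    rcases hrel with ⟨k, hk⟩ | hnd
    · obtain ⟨j, -, hj⟩ := (Nat.dvd_prime_pow hp).mp (hk ▸ key)
      exact Or.inl ⟨j, hj⟩
    · exact Or.inr fun hd => hnd (hd.trans key)

private lemma step_subgroupOf {A B M : Subgroup G} (hAB : A ≤ B) (hBM : B ≤ M)
    (hnorm : ((A.subgroupOf B)).Normal) :
    (A.subgroupOf M) ≤ (B.subgroupOf M) ∧
    (((A.subgroupOf M).subgroupOf (B.subgroupOf M))).Normal ∧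
    (A.subgroupOf M).relIndex (B.subgroupOf M) = A.relIndex B := by
  have hle : A.subgroupOf M ≤ B.subgroupOf M := Subgroup.comap_mono hAB
  refine ⟨hle, ?_, Subgroup.relIndex_subgroupOf hBM⟩
  rw [Subgroup.normal_subgroupOf_iff hle]
  intro h k hh hk
  rw [Subgroup.mem_subgroupOf] at hh hk ⊢
  simpa using (Subgroup.normal_subgroupOf_iff hAB).mp hnorm ↑h ↑k hh hk

private lemma normal_of_subgroupOf_top {H : Subgroup G}
    (h : (H.subgroupOf ⊤).Normal) : H.Normal := by
  constructor
  intro x hx g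
  exact (Subgroup.normal_subgroupOf_iff le_top).mp h x g hx trivial

end SolvLemmas

universe u

private lemma exists_nontrivial_normal_p_or_pprime {p : ℕ} (hp : p.Prime) :
    ∀ (n : ℕ) (G : Type u) [Group G] [Finite G] (s : Fin (n + 1) → Subgroup G),
      s 0 = ⊥ → s (Fin.last n) = ⊤ →
      (∀ i : Fin n, s i.castSucc ≤ s i.succ ∧
        ((s i.castSucc).subgroupOf (s i.succ)).Normal ∧
        ((∃ k : ℕ, (s i.castSucc).relIndex (s i.succ) = p ^ k) ∨
          ¬ p ∣ (s i.castSucc).relIndex (s i.succ))) →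
      Nontrivial G →
      ∃ K : Subgroup G, K.Normal ∧ K ≠ ⊥ ∧ (IsPGroup p K ∨ ¬ p ∣ Nat.card K) := by
  intro n
  induction n with
  | zero =>
    intro G _ _ s h0 hl _ hnt
    exact absurd (h0 ▸ hl ▸ rfl : (⊥ : Subgroup G) = ⊤) bot_ne_top
  | succ n ih =>
    intro G _ _ s h0 hl hstep hnt
    haveI := Fact.mk hp
    set M := s (Fin.last n).castSucc with hM
    obtain ⟨hle, hnorm, hrel⟩ := hstep (Fin.last n)
    rw [Fin.succ_last, hl] at hle hnorm hrel
    haveI hMn : M.Normal := normal_of_subgroupOf_top hnorm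
    rw [Subgroup.relIndex_top_right] at hrel
    by_cases hMbot : M = ⊥
    · refine ⟨⊤, inferInstance, fun h => (bot_ne_top (α := Subgroup G)) h.symm, ?_⟩
      rw [← hM, hMbot, Subgroup.index_bot] at hrel
      have hcard : Nat.card (⊤ : Subgroup G) = Nat.card G :=
        Nat.card_congr Subgroup.topEquiv.toEquiv
      rcases hrel with ⟨k, hk⟩ | hnd
      · exact Or.inl (IsPGroup.iff_card.mpr ⟨k, hcard ▸ hk⟩)
      · exact Or.inr (hcard ▸ hnd)
    · by_cases hMtop : M = ⊤
      · refine ih G (fun j => s j.castSucc) (by simpa using h0)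
          hMtop ?_ hnt
        intro i
        have h := hstep i.castSucc
        rwa [Fin.succ_castSucc] at h
      · have hmono : Monotone s := Fin.monotone_iff_le_succ.mpr fun i => (hstep i).1
        haveI : Nontrivial M :=
          Finite.one_lt_card_iff_nontrivial.mp ((Subgroup.one_lt_card_iff_ne_bot M).mpr hMbot)
        have hled : ∀ j : Fin (n + 1), s j.castSucc ≤ M := fun j =>
          hmono (Fin.castSucc_le_castSucc_iff.mpr (Fin.le_last j))
        obtain ⟨K', hK'n, hK'ne, hK'ty⟩ := ih M (fun j => (s j.castSucc).subgroupOf M)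
          (by simpa using congrArg (fun t => Subgroup.subgroupOf t M) h0)
          (by simpa [← hM] using Subgroup.subgroupOf_self M)
          (fun i => by
            obtain ⟨h1, h2, h3⟩ := hstep i.castSucc
            rw [Fin.succ_castSucc] at h1 h2 h3
            obtain ⟨g1, g2, g3⟩ := step_subgroupOf h1 (hled i.succ) h2
            refine ⟨g1, g2, ?_⟩
            rcases h3 with ⟨k, hk⟩ | hnd
            · exact Or.inl ⟨k, g3.trans hk⟩
            · refine Or.inr fun hd => hnd ?_
              have hd' : p ∣ ((s i.castSucc.castSucc).subgroupOf M).relIndex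
                  ((s i.succ.castSucc).subgroupOf M) := hd
              rwa [g3] at hd') inferInstance
        rcases hK'ty with hKp | hKp'
        · have hpc : pCore p ↥M ≠ ⊥ := fun h =>
            hK'ne (le_bot_iff.mp (h ▸ le_pCore hK'n hKp))
          refine ⟨(pCore p ↥M).map M.subtype, pCore_map_subtype_normal hp M, ?_,
            Or.inl (((pCore_spec hp).2).map _)⟩
          intro h
          exact hpc ((Subgroup.map_eq_bot_iff_of_injective _ (Subgroup.subtype_injective M)).mp h)
        · have hpc : pPrimeCore p ↥M ≠ ⊥ := fun h =>
            hK'ne (le_bot_iff.mp (h ▸ le_pPrimeCore hK'n hKp'))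
          refine ⟨(pPrimeCore p ↥M).map M.subtype, pPrimeCore_map_subtype_normal hp M, ?_, ?_⟩
          · intro h
            exact hpc ((Subgroup.map_eq_bot_iff_of_injective _ (Subgroup.subtype_injective M)).mp h)
          · refine Or.inr ?_
            have hc : Nat.card ((pPrimeCore p ↥M).map M.subtype) = Nat.card (pPrimeCore p ↥M) :=
              Nat.card_congr (Subgroup.equivMapOfInjective _ _
                (Subgroup.subtype_injective M)).toEquiv.symm
            rw [hc]
            exact (pPrimeCore_spec hp).2

private lemma main_aux {p q : ℕ} (hp : p.Prime) (hq : q.Prime) (hpq : q ≠ p) :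
    ∀ (n : ℕ) (G : Type u) [Group G] [Finite G], Nat.card G ≤ n →
      IsPSolvable p G → ∀ (P : Sylow p G) (Q : Subgroup G), IsPGroup q Q →
      (∀ x ∈ (P : Subgroup G), ∀ y ∈ Q, Commute x y) → Q ≤ pPrimeCore p G := by
  intro n
  induction n with
  | zero =>
    intro G _ _ hcard
    have : 0 < Nat.card G := Nat.card_pos
    omega
  | succ n ih =>
    intro G _ _ hcard hsolv P Q hQ hcomm
    haveI hfp := Fact.mk hp
    obtain ⟨hNn, hNc⟩ := pPrimeCore_spec (p := p) (G := G) hp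
    have key : ∀ (K : Subgroup G) (hKn : K.Normal), K ≠ ⊥ →
        (Q.map (QuotientGroup.mk' K) ≤ pPrimeCore p (G ⧸ K)) := by
      intro K hKn hKne
      haveI := hKn
      have hsurj : Function.Surjective (QuotientGroup.mk' K) := QuotientGroup.mk'_surjective K
      have hcard' : Nat.card (G ⧸ K) ≤ n := by
        have h1 : Nat.card G = Nat.card (G ⧸ K) * Nat.card K :=
          Subgroup.card_eq_card_quotient_mul_card_subgroup K
        have h2 : 1 < Nat.card K := (Subgroup.one_lt_card_iff_ne_bot K).mpr hKne
        have h3 : 0 < Nat.card (G ⧸ K) := Nat.card_pos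
        have h4 : Nat.card (G ⧸ K) * 2 ≤ Nat.card G := h1 ▸ Nat.mul_le_mul_left _ h2
        omega
      refine ih (G ⧸ K) hcard' (isPSolvable_of_surjective hp _ hsurj hsolv)
        (P.mapSurjective hsurj) (Q.map _) (hQ.map _) ?_
      intro x hx y hy
      rw [Sylow.coe_mapSurjective] at hx
      obtain ⟨a, ha, rfl⟩ := hx
      obtain ⟨b, hb, rfl⟩ := hy
      exact (hcomm a ha b hb).map _
    rcases eq_or_ne (pPrimeCore p G) ⊥ with hbot | hbot
    · -- O_{p'}(G) = ⊥
      rcases subsingleton_or_nontrivial G with hss | hnt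
      · intro x hx
        have hx1 : x = 1 := Subsingleton.elim x 1
        rw [hx1]; exact one_mem _
      obtain ⟨n', s, h0, hl, hstep⟩ := hsolv
      obtain ⟨K, hKn, hKne, hKty⟩ :=
        exists_nontrivial_normal_p_or_pprime hp n' G s h0 hl hstep hnt
      haveI := hKn
      have hKp : IsPGroup p K := by
        rcases hKty with h | h
        · exact h
        · exact absurd (le_bot_iff.mp (hbot ▸ le_pPrimeCore hKn h)) hKne
      have hKP : K ≤ (P : Subgroup G) := by
        obtain ⟨R, hKR⟩ := hKp.exists_le_sylow
        obtain ⟨g, hg⟩ := MulAction.exists_smul_eq G R P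
        intro x hx
        rw [← hg, Sylow.smul_def, show ((MulAut.conj g • R : Sylow p G) : Subgroup G)
          = MulAut.conj g • (R : Subgroup G) from rfl]
        exact (Subgroup.mem_smul_pointwise_iff_exists x (MulAut.conj g) (R : Subgroup G)).mpr
          ⟨g⁻¹ * x * g, hKR (by simpa using hKn.conj_mem x hx g⁻¹),
            by simp [MulAut.conj_apply]; group⟩
      have hQ' := key K hKn hKne
      obtain ⟨hN'n, hN'c⟩ := pPrimeCore_spec (G := G ⧸ K) hp
      set π := QuotientGroup.mk' K with hπ
      set M := (pPrimeCore p (G ⧸ K)).comap π with hMdef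
      have hQM : Q ≤ M := fun x hx => hQ' (mem_map_of_mem _ hx)
      have hMn : M.Normal := hN'n.comap _
      set C := M ⊓ Subgroup.centralizer (K : Set G) with hCdef
      have hQC : Q ≤ C := le_inf hQM (fun y hy => Subgroup.mem_centralizer_iff.mpr
        (fun k hk => hcomm k (hKP hk) y hy))
      have hCn : C.Normal := by
        constructor
        intro c hc g
        refine Subgroup.mem_inf.mpr ⟨hMn.conj_mem c (Subgroup.mem_inf.mp hc).1 g, ?_⟩
        rw [Subgroup.mem_centralizer_iff]
        intro k hk
        have h1 : g⁻¹ * k * g ∈ K := by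
          have := hKn.conj_mem k hk g⁻¹; simpa [mul_assoc] using this
        have h2 := Subgroup.mem_centralizer_iff.mp (Subgroup.mem_inf.mp hc).2 _ h1
        calc k * (g * c * g⁻¹) = g * (g⁻¹ * k * g * c) * g⁻¹ := by group
          _ = g * (c * (g⁻¹ * k * g)) * g⁻¹ := by rw [h2]
          _ = (g * c * g⁻¹) * k := by group
      haveI := hCn
      set ZC := K.subgroupOf C with hZCdef
      have hZCp : IsPGroup p ZC := hKp.comap_subtype
      set f := π.comp C.subtype with hfdef
      have hker : f.ker = ZC := by
        ext x
        simp [f, MonoidHom.mem_ker, hZCdef, Subgroup.mem_subgroupOf, hπ,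
          QuotientGroup.eq_one_iff]
      have hCM : C ≤ M := inf_le_left
      have hrange : ¬ p ∣ Nat.card f.range := by
        intro hd
        apply hN'c
        refine hd.trans (Subgroup.card_dvd_of_le ?_)
        rw [MonoidHom.range_comp, Subgroup.range_subtype]
        exact le_trans (Subgroup.map_mono hCM) (Subgroup.map_comap_le _ _)
      have hZCi : ¬ p ∣ ZC.index := by
        rw [← hker, Subgroup.index_ker]
        exact hrange
      obtain ⟨a, hZCcard⟩ := hZCp.exists_card_eq
      have hcop : Nat.Coprime (Nat.card ZC) ZC.index := by
        rw [hZCcard]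
        exact Nat.Coprime.pow_left _ ((Nat.Prime.coprime_iff_not_dvd hp).mpr hZCi)
      obtain ⟨H, hH⟩ := Subgroup.exists_right_complement'_of_coprime hcop
      have hcentral : ∀ z : C, z ∈ ZC → ∀ c : C, c * z = z * c := by
        intro z hz c
        have hzK : (z : G) ∈ K := hz
        have hcK := Subgroup.mem_centralizer_iff.mp (Subgroup.mem_inf.mp c.2).2 _ hzK
        exact Subtype.ext hcK.symm
      haveI hHn : H.Normal := by
        constructor
        intro h hh c
        obtain ⟨⟨z, h₀⟩, hzh⟩ := hH.2 c
        rw [← hzh]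
        have hz' : (z : C) ∈ ZC := z.2
        have hmem : (h₀ : C) * h * (h₀ : C)⁻¹ ∈ H := mul_mem (mul_mem h₀.2 hh) (inv_mem h₀.2)
        have hcc := hcentral z hz' ((h₀ : C) * h * (h₀ : C)⁻¹)
        have heq : ((z : C) * (h₀ : C)) * h * ((z : C) * (h₀ : C))⁻¹
            = (h₀ : C) * h * (h₀ : C)⁻¹ := by
          rw [mul_inv_rev]
          calc (z : C) * (h₀ : C) * h * (((h₀ : C))⁻¹ * ((z : C))⁻¹)
              = (z : C) * ((h₀ : C) * h * ((h₀ : C))⁻¹) * ((z : C))⁻¹ := by group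
            _ = ((h₀ : C) * h * ((h₀ : C))⁻¹) * (z : C) * ((z : C))⁻¹ := by rw [← hcc]
            _ = (h₀ : C) * h * ((h₀ : C))⁻¹ := by group
        rw [heq]
        exact hmem
      have hcard_mul := hH.card_mul
      have hidx_mul := Subgroup.index_mul_card ZC
      have hZCpos : 0 < Nat.card ZC := Nat.card_pos
      have hcardH : Nat.card H = ZC.index := by
        have hmm : Nat.card ZC * Nat.card H = Nat.card ZC * ZC.index := by
          rw [hcard_mul, ← hidx_mul]; ring
        exact Nat.eq_of_mul_eq_mul_left hZCpos hmm
      have hHp' : ¬ p ∣ Nat.card H := by rw [hcardH]; exact hZCi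
      have hmemH : ∀ x : C, ¬ p ∣ orderOf x → x ∈ H := by
        intro x hx
        have h1 : orderOf ((QuotientGroup.mk' H) x) ∣ orderOf x :=
          orderOf_map_dvd (QuotientGroup.mk' H) x
        have h3 : orderOf ((QuotientGroup.mk' H) x) ∣ p ^ a := by
          have h2 := orderOf_dvd_natCard ((QuotientGroup.mk' H) x)
          have h4 : Nat.card (C ⧸ H) = Nat.card ZC := hH.index_eq_card
          rwa [h4, hZCcard] at h2
        obtain ⟨j, hj, hje⟩ := (Nat.dvd_prime_pow hp).mp h3
        have hj0 : j = 0 := by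
          by_contra hj0
          exact hx (dvd_trans (hje ▸ dvd_pow_self p hj0) h1)
        have h5 : orderOf ((QuotientGroup.mk' H) x) = 1 := by rw [hje, hj0, pow_zero]
        have h6 := orderOf_eq_one_iff.mp h5
        exact (QuotientGroup.eq_one_iff x).mp (by simpa using h6)
      have hmemH' : ∀ x : C, x ∈ H → ¬ p ∣ orderOf (x : G) := by
        intro x hx hd
        have h1 : orderOf (C.subtype x) = orderOf x :=
          orderOf_injective C.subtype (Subgroup.subtype_injective C) x
        have h2 : orderOf x ∣ Nat.card H := Subgroup.orderOf_dvd_natCard H hx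
        exact hHp' (dvd_trans (h1 ▸ hd) h2)
      set Hc := H.map C.subtype with hHcdef
      have hHcn : Hc.Normal := by
        constructor
        rintro x hx g
        obtain ⟨x', hx', rfl⟩ := hx
        have hCmem : g * (x' : G) * g⁻¹ ∈ C := hCn.conj_mem _ x'.2 g
        refine ⟨⟨g * (x' : G) * g⁻¹, hCmem⟩, ?_, rfl⟩
        apply hmemH
        have e1 : orderOf (C.subtype (⟨g * (x' : G) * g⁻¹, hCmem⟩ : C))
            = orderOf (⟨g * (x' : G) * g⁻¹, hCmem⟩ : C) :=
          orderOf_injective C.subtype (Subgroup.subtype_injective C) _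
        have e2 : orderOf (g * (x' : G) * g⁻¹) = orderOf (x' : G) := by
          simpa using orderOf_injective (MulAut.conj g).toMonoidHom
            (MulAut.conj g).injective (x' : G)
        intro hd
        apply hmemH' x' hx'
        rw [← e2]
        rw [show C.subtype (⟨g * (x' : G) * g⁻¹, hCmem⟩ : C) = g * (x' : G) * g⁻¹ from rfl] at e1
        rwa [← e1] at hd
      have hHccard : ¬ p ∣ Nat.card Hc := by
        have hcc : Nat.card Hc = Nat.card H :=
          Nat.card_congr (Subgroup.equivMapOfInjective _ _
            (Subgroup.subtype_injective C)).toEquiv.symm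
        rw [hcc]; exact hHp'
      have hHcbot : Hc = ⊥ := by
        have hle := le_pPrimeCore hHcn hHccard
        rw [hbot] at hle
        exact le_bot_iff.mp hle
      have hHbot : H = ⊥ :=
        (Subgroup.map_eq_bot_iff_of_injective _ (Subgroup.subtype_injective C)).mp hHcbot
      have hZCtop : ZC = ⊤ := by
        have h1 : Nat.card H = 1 := by rw [hHbot]; exact Subgroup.card_bot
        have h2 : ZC.index = 1 := by rw [← hcardH, h1]
        exact Subgroup.index_eq_one.mp h2
      have hCK : C ≤ K := Subgroup.subgroupOf_eq_top.mp hZCtop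
      haveI := Fact.mk hq
      have hQp : IsPGroup p Q := hKp.to_le (hQC.trans hCK)
      obtain ⟨a1, ha1⟩ := hQ.exists_card_eq
      obtain ⟨a2, ha2⟩ := hQp.exists_card_eq
      have hq1 : Nat.card Q = 1 := by
        by_contra hne
        have ha10 : a1 ≠ 0 := by intro h; exact hne (by rw [ha1, h, pow_zero])
        have hdq : q ∣ Nat.card Q := ha1 ▸ dvd_pow_self q ha10
        rw [ha2] at hdq
        exact hpq ((Nat.prime_dvd_prime_iff_eq hq hp).mp (hq.dvd_of_dvd_pow hdq))
      have hQbot : Q = ⊥ := Subgroup.card_eq_one.mp hq1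
      rw [hQbot]
      exact bot_le
    · -- O_{p'}(G) ≠ ⊥
      haveI := hNn
      have hQ' := key _ hNn hbot
      obtain ⟨hN'n, hN'c⟩ := pPrimeCore_spec (G := G ⧸ pPrimeCore p G) hp
      set π := QuotientGroup.mk' (pPrimeCore p G) with hπ
      set M := (pPrimeCore p (G ⧸ pPrimeCore p G)).comap π with hMdef
      have hQM : Q ≤ M := fun x hx => hQ' (mem_map_of_mem _ hx)
      have hMn : M.Normal := hN'n.comap _
      set f := π.comp M.subtype with hfdef
      have hNM : pPrimeCore p G ≤ M := by
        intro x hx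
        refine Subgroup.mem_comap.mpr ?_
        rw [show π x = 1 from (QuotientGroup.eq_one_iff x).mpr hx]
        exact one_mem _
      have hker : f.ker = (pPrimeCore p G).subgroupOf M := by
        ext x
        simp [f, MonoidHom.mem_ker, Subgroup.mem_subgroupOf, hπ, QuotientGroup.eq_one_iff]
      have hcardker : Nat.card f.ker = Nat.card (pPrimeCore p G) := by
        rw [hker]
        exact Nat.card_congr (Subgroup.subgroupOfEquivOfLe hNM).toEquiv
      have h5 : Nat.card M = f.ker.index * Nat.card f.ker := (Subgroup.index_mul_card f.ker).symm
      have hrange : ¬ p ∣ f.ker.index := by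
        rw [Subgroup.index_ker]
        intro hd
        apply hN'c
        refine hd.trans (Subgroup.card_dvd_of_le ?_)
        rw [MonoidHom.range_comp, Subgroup.range_subtype]
        exact Subgroup.map_comap_le _ _
      have hMc : ¬ p ∣ Nat.card M := by
        rw [h5]; intro hd
        rcases (Nat.Prime.dvd_mul hp).mp hd with h | h
        exacts [hrange h, hNc (hcardker ▸ h)]
      exact hQM.trans (le_pPrimeCore hMn hMc)

/-- If `G` is finite `p`-solvable, `P ∈ Syl_p(G)`, and `Q` is a `q`-subgroup (`q ≠ p`)
with `[P,Q] = 1`, then `Q ≤ O_{p'}(G)`. -/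
theorem q_subgroup_le_pPrimeCore_of_centralizes_sylow
    (G : Type*) [Group G] [Finite G] (p q : ℕ) (hp : p.Prime) (hq : q.Prime) (hpq : q ≠ p)
    (hsolv : IsPSolvable p G) (P : Sylow p G) (Q : Subgroup G) (hQ : IsPGroup q Q)
    (hcomm : ∀ x ∈ (P : Subgroup G), ∀ y ∈ Q, Commute x y) :
    Q ≤ pPrimeCore p G :=
  main_aux hp hq hpq (Nat.card G) G le_rfl hsolv P Q hQ hcomm
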